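/- arXiv:2401.03335 — 2 statements merged into one kernel-verified Lean document; each statement's English description precedes it below -/
import Mathlib

section
/- Let (G_i)_{i∈I} be a family of nontrivial groups, let i₀ ∈ I, and let N be a nontrivial normal subgroup of G_{i₀}. Let H be the normal closure in the free product ∐_{i∈I} G_i of the image of N under the canonical inclusion G_{i₀} → ∐_{i∈I} G_i. Then there exists a subgroup K of H such that H is the internal free product of the image of N and K; that is, the canonical homomorphism from the (external) free product N ∗ K to the free product ∐_{i∈I} G_i, induced by the inclusion of N via the canonical map G_{i₀} → ∐_{i∈I} G_i and the inclusion of K, is injective and has image exactly H. -/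
open Monoid CoprodI Subgroup Function

namespace Stmt0

variable {I : Type*} (G : I → Type*) [∀ i, Group (G i)] (i₀ : I)
  (N : Subgroup (G i₀)) [N.Normal]

/-- the quotient `G i₀ ⧸ N` -/
local notation "B" => G i₀ ⧸ N
local notation "Γ" => Monoid.CoprodI G

set_option linter.unusedSectionVars false

open scoped Classical in
/-- a section of the quotient map sending `1` to `1`. -/
noncomputable def sec (b : B) : G i₀ :=
  if b = 1 then 1 else b.out

@[simp] theorem sec_one : sec G i₀ N 1 = 1 := by
  unfold sec; simp

@[simp] theorem mk_sec (b : B) : (QuotientGroup.mk (sec G i₀ N b) : B) = b := by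
  unfold sec; split
  · simp only [*]; rfl
  · exact QuotientGroup.out_eq' b

theorem sec_eq_one_iff {b : B} : sec G i₀ N b = 1 ↔ b = 1 := by
  constructor
  · intro h; have := mk_sec G i₀ N b; rw [h] at this; simpa using this.symm
  · intro h; simp [h]

/-- canonical representatives -/
def canon (g : G i₀) : Prop := sec G i₀ N (QuotientGroup.mk g) = g

theorem canon_sec (b : B) : canon G i₀ N (sec G i₀ N b) := by
  unfold canon; rw [mk_sec]

theorem canon_one : canon G i₀ N 1 := by
  unfold canon; simp

/-- letters -/
abbrev Letter := Σ i, G i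

/-- realization of a reversed letter list (head of the list is the **last** letter) -/
def embL : List (Letter G) → Γ
  | [] => 1
  | p :: r => embL r * CoprodI.of p.2

@[simp] theorem embL_nil : embL G ([] : List (Letter G)) = 1 := rfl
@[simp] theorem embL_cons (p : Letter G) (r : List (Letter G)) :
    embL G (p :: r) = embL G r * CoprodI.of p.2 := rfl

/-- validity of a (reversed) tail word, without the head (=last-letter) condition -/
def TailOK (l : List (Letter G)) : Prop :=
  l.IsChain (fun a b => a.1 ≠ b.1) ∧ ∀ p ∈ l, p.2 ≠ 1 ∧ ∀ (h : p.1 = i₀), canon G i₀ N (h ▸ p.2)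

/-- the head (= last letter) is not an `i₀`-letter -/
def NoI₀ : List (Letter G) → Prop
  | [] => True
  | p :: _ => p.1 ≠ i₀

/-- type of conjugator tails -/
abbrev Tl := {l : List (Letter G) // TailOK G i₀ N l ∧ NoI₀ G i₀ l}

/-- the empty tail -/
def emptyT : Tl G i₀ N := ⟨[], ⟨List.isChain_nil, by simp⟩, trivial⟩

/-- The abstract free product of copies of `N` indexed by tails -/
abbrev F := Monoid.CoprodI (fun _ : Tl G i₀ N => ↥N)

/-- the conjugation homomorphisms `N →* Γ`, `n ↦ t n t⁻¹` -/
noncomputable def conjHom (t : Tl G i₀ N) : ↥N →* Γ :=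
  ((MulAut.conj (embL G t.1)).toMonoidHom).comp ((CoprodI.of (i := i₀)).comp N.subtype)

theorem conjHom_apply (t : Tl G i₀ N) (n : ↥N) :
    conjHom G i₀ N t n = embL G t.1 * CoprodI.of (n : G i₀) * (embL G t.1)⁻¹ := rfl

/-- the main comparison map `F →* Γ` -/
noncomputable def psi : F G i₀ N →* Γ := CoprodI.lift (conjHom G i₀ N)

@[simp] theorem psi_of (t : Tl G i₀ N) (n : ↥N) :
    psi G i₀ N (CoprodI.of (i := t) n) = embL G t.1 * CoprodI.of (n : G i₀) * (embL G t.1)⁻¹ := by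
  unfold psi; rw [CoprodI.lift_of]; rfl

/-- letters of `v`-words -/
abbrev VL := Tl G i₀ N × ↥N

/-- validity of (reversed) v-words -/
def VOK (l : List (VL G i₀ N)) : Prop :=
  l.IsChain (fun a b => a.1 ≠ b.1) ∧ ∀ p ∈ l, p.2 ≠ 1

/-- v-words -/
abbrev Vw := {l : List (VL G i₀ N) // VOK G i₀ N l}

/-- the empty v-word -/
def emptyV : Vw G i₀ N := ⟨[], List.isChain_nil, by simp⟩

/-- realization of a v-word in `F` -/
def embV : List (VL G i₀ N) → F G i₀ N
  | [] => 1
  | p :: r => embV r * CoprodI.of (i := p.1) p.2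

@[simp] theorem embV_nil : embV G i₀ N [] = 1 := rfl
@[simp] theorem embV_cons (p) (r) :
    embV G i₀ N (p :: r) = embV G i₀ N r * CoprodI.of (i := p.1) p.2 := rfl

open scoped Classical in
/-- append a letter `n` at coordinate `t` at the end of a (reversed) v-word, with merging -/
noncomputable def vappendL : List (VL G i₀ N) → Tl G i₀ N → ↥N → List (VL G i₀ N)
  | [], t, n => if n = 1 then [] else [(t, n)]
  | (t', m) :: rest, t, n =>
      if n = 1 then (t', m) :: rest
      else if t' = t then (if m * n = 1 then rest else (t, m * n) :: rest)
      else (t, n) :: (t', m) :: rest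

theorem vappendL_one (l : List (VL G i₀ N)) (t : Tl G i₀ N) :
    vappendL G i₀ N l t 1 = l := by
  rcases l with _ | ⟨⟨t', m⟩, rest⟩ <;> simp [vappendL]


theorem vappendL_ok (l : List (VL G i₀ N)) (hl : VOK G i₀ N l) (t : Tl G i₀ N) (n : ↥N) :
    VOK G i₀ N (vappendL G i₀ N l t n) := by
  classical
  by_cases hn : n = 1
  · subst hn; rwa [vappendL_one]
  rcases l with _ | ⟨⟨t', m⟩, rest⟩
  · simp only [vappendL, if_neg hn]
    exact ⟨List.isChain_singleton _, by simpa using hn⟩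
  rcases hl with ⟨hc, hne⟩
  rw [List.isChain_cons] at hc
  by_cases ht : t' = t
  · subst ht
    by_cases hmn : m * n = 1
    · simp only [vappendL, if_neg hn, if_pos rfl, if_pos hmn]
      exact ⟨hc.2, fun p hp => hne p (List.mem_cons_of_mem _ hp)⟩
    · simp only [vappendL, if_neg hn, if_pos rfl, if_neg hmn]
      refine ⟨List.isChain_cons.2 ⟨hc.1, hc.2⟩, ?_⟩
      intro p hp
      rcases List.mem_cons.mp hp with rfl | hp'
      · exact hmn
      · exact hne p (List.mem_cons_of_mem _ hp')
  · simp only [vappendL, if_neg hn, if_neg ht]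
    refine ⟨List.isChain_cons.2 ⟨?_, List.isChain_cons.2 ⟨hc.1, hc.2⟩⟩, ?_⟩
    · rintro b hb
      simp only [List.head?_cons, Option.mem_def, Option.some.injEq] at hb
      subst hb
      exact fun hh => ht hh.symm
    · intro p hp
      rcases List.mem_cons.mp hp with rfl | hp'
      · exact hn
      · exact hne p hp'

theorem embV_vappendL (l : List (VL G i₀ N)) (t : Tl G i₀ N) (n : ↥N) :
    embV G i₀ N (vappendL G i₀ N l t n)
      = embV G i₀ N l * CoprodI.of (i := t) n := by
  classical
  by_cases hn : n = 1
  · subst hn; rw [vappendL_one]; simp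
  rcases l with _ | ⟨⟨t', m⟩, rest⟩
  · simp [vappendL, hn]
  by_cases ht : t' = t
  · subst ht
    by_cases hmn : m * n = 1
    · have : vappendL G i₀ N ((t', m) :: rest) t' n = rest := by
        simp [vappendL, hn, hmn]
      rw [this, embV_cons, mul_assoc, ← map_mul, hmn, map_one, mul_one]
    · have : vappendL G i₀ N ((t', m) :: rest) t' n = (t', m * n) :: rest := by
        simp [vappendL, hn, hmn]
      rw [this, embV_cons, embV_cons, map_mul, mul_assoc]
  · have : vappendL G i₀ N ((t', m) :: rest) t n = (t, n) :: (t', m) :: rest := by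
      simp [vappendL, hn, ht]
    rw [this, embV_cons, embV_cons]

theorem vappendL_assoc (l : List (VL G i₀ N)) (hl : VOK G i₀ N l) (t : Tl G i₀ N) (n n' : ↥N) :
    vappendL G i₀ N (vappendL G i₀ N l t n) t n'
      = vappendL G i₀ N l t (n * n') := by
  classical
  by_cases hn : n = 1
  · subst hn; rw [vappendL_one, one_mul]
  by_cases hn' : n' = 1
  · subst hn'; rw [vappendL_one, mul_one]
  rcases l with _ | ⟨⟨t', m⟩, rest⟩
  · by_cases hnn : n * n' = 1 <;> simp [vappendL, hn, hn', hnn]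
  rcases hl with ⟨hc, hne⟩
  rw [List.isChain_cons] at hc
  have hm : m ≠ 1 := hne (t', m) (by simp)
  by_cases ht : t' = t
  · subst ht
    by_cases hmn : m * n = 1
    · -- first append pops the head, leaving `rest` whose head is not at `t'`
      have hd : ∀ q ∈ rest.head?, ¬ (q.1 = t') := fun q hq h => (hc.1 q hq) h.symm
      by_cases hnn : n * n' = 1
      · -- then n' = m, and the second append re-adds the popped letter
        have hm' : m = n' := by
          rw [← mul_one m, ← hnn, ← mul_assoc, hmn, one_mul]
        simp only [vappendL, if_neg hn, if_pos rfl, if_pos hmn, if_pos hnn]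
        rcases rest with _ | ⟨⟨q, k⟩, r2⟩
        · simp [vappendL, hn', hm']
        · have hq : ¬ (q = t') := fun h => hd (q, k) (by simp) (by simp [h])
          simp [vappendL, hn', hq, hm']
      · have h2 : m * (n * n') = n' := by rw [← mul_assoc, hmn, one_mul]
        simp only [vappendL, if_neg hn, if_pos rfl, if_pos hmn, if_neg hnn, h2]
        rcases rest with _ | ⟨⟨q, k⟩, r2⟩
        · simp [vappendL, hn']
        · have hq : ¬ (q = t') := fun h => hd (q, k) (by simp) (by simp [h])
          simp [vappendL, hn', hq]
    · by_cases hnn : n * n' = 1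
      · have h2 : m * n * n' = m := by rw [mul_assoc, hnn, mul_one]
        simp [vappendL, hn, hn', hnn, hmn, h2, hm]
      · by_cases h3 : m * n * n' = 1
        · have h4 : m * (n * n') = 1 := by rwa [← mul_assoc]
          simp [vappendL, hn, hn', hnn, hmn, h3, h4]
        · have h4 : ¬ m * (n * n') = 1 := by rwa [← mul_assoc]
          simp [vappendL, hn, hn', hnn, hmn, h3, h4, mul_assoc]
  · by_cases hnn : n * n' = 1
    · simp [vappendL, hn, hn', hnn, ht]
    · simp [vappendL, hn, hn', hnn, ht]

open scoped Classical in
/-- pop a possible trailing `i₀`-letter into the quotient slot -/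
noncomputable def splitL : List (Letter G) → List (Letter G) × (G i₀ ⧸ N)
  | [] => ([], 1)
  | p :: r => if h : p.1 = i₀ then (r, QuotientGroup.mk (h ▸ p.2)) else (p :: r, 1)

theorem splitL_noI₀ (l : List (Letter G)) (h : NoI₀ G i₀ l) :
    splitL G i₀ N l = (l, 1) := by
  rcases l with _ | ⟨p, r⟩
  · rfl
  · exact dif_neg h

theorem splitL_ok (l : List (Letter G)) (hl : TailOK G i₀ N l) :
    (TailOK G i₀ N (splitL G i₀ N l).1 ∧ NoI₀ G i₀ (splitL G i₀ N l).1) := by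
  classical
  rcases l with _ | ⟨p, r⟩
  · exact ⟨hl, trivial⟩
  rcases hl with ⟨hc, hne⟩
  rw [List.isChain_cons] at hc
  by_cases h : p.1 = i₀
  · have h1 : splitL G i₀ N (p :: r) = (r, QuotientGroup.mk (h ▸ p.2)) := dif_pos h
    rw [h1]
    refine ⟨⟨hc.2, fun q hq => hne q (List.mem_cons_of_mem _ hq)⟩, ?_⟩
    rcases r with _ | ⟨q, r2⟩
    · trivial
    · intro hq
      exact hc.1 q (by simp) (h.trans hq.symm)
  · have h1 : splitL G i₀ N (p :: r) = (p :: r, 1) := dif_neg h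
    rw [h1]
    exact ⟨⟨List.isChain_cons.2 ⟨hc.1, hc.2⟩, hne⟩, h⟩

theorem embL_splitL (l : List (Letter G)) (hl : TailOK G i₀ N l) :
    embL G (splitL G i₀ N l).1 * CoprodI.of (sec G i₀ N (splitL G i₀ N l).2)
      = embL G l := by
  classical
  rcases l with _ | ⟨p, r⟩
  · simp [splitL]
  by_cases h : p.1 = i₀
  · have h1 : splitL G i₀ N (p :: r) = (r, QuotientGroup.mk (h ▸ p.2)) := dif_pos h
    rw [h1]
    have hcanon : canon G i₀ N (h ▸ p.2) := (hl.2 p (by simp)).2 h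
    dsimp only
    rw [show sec G i₀ N (QuotientGroup.mk (h ▸ p.2)) = (h ▸ p.2) from hcanon]
    rcases p with ⟨j, g⟩
    cases h
    rfl
  · have h1 : splitL G i₀ N (p :: r) = (p :: r, 1) := dif_neg h
    rw [h1]
    simp

/-- the state space -/
abbrev St := Vw G i₀ N × Tl G i₀ N × (G i₀ ⧸ N)

/-- append to a `v`-word -/
noncomputable def vappend (v : Vw G i₀ N) (t : Tl G i₀ N) (n : ↥N) : Vw G i₀ N :=
  ⟨vappendL G i₀ N v.1 t n, vappendL_ok G i₀ N v.1 v.2 t n⟩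

/-- the `N`-part of `sec b * x` -/
noncomputable def nhat (b : G i₀ ⧸ N) (x : G i₀) : ↥N :=
  ⟨sec G i₀ N b * x * (sec G i₀ N (b * QuotientGroup.mk x))⁻¹, by
    rw [← QuotientGroup.eq_one_iff]
    have : ((QuotientGroup.mk (sec G i₀ N b * x * (sec G i₀ N (b * QuotientGroup.mk x))⁻¹) :
        G i₀ ⧸ N)) = b * QuotientGroup.mk x * (b * QuotientGroup.mk x)⁻¹ := by
      rw [QuotientGroup.mk_mul, QuotientGroup.mk_mul, QuotientGroup.mk_inv, mk_sec, mk_sec]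
    rw [this, mul_inv_cancel]⟩

theorem nhat_coe (b : G i₀ ⧸ N) (x : G i₀) :
    ((nhat G i₀ N b x : ↥N) : G i₀)
      = sec G i₀ N b * x * (sec G i₀ N (b * QuotientGroup.mk x))⁻¹ := rfl

@[simp] theorem nhat_one (b : G i₀ ⧸ N) : nhat G i₀ N b 1 = 1 := by
  apply Subtype.ext
  rw [nhat_coe]
  simp

theorem nhat_mul (b : G i₀ ⧸ N) (x y : G i₀) :
    nhat G i₀ N b x * nhat G i₀ N (b * QuotientGroup.mk x) y = nhat G i₀ N b (x * y) := by
  apply Subtype.ext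
  push_cast
  rw [nhat_coe, nhat_coe, nhat_coe, QuotientGroup.mk_mul, ← mul_assoc b]
  group

open scoped Classical in
/-- action of a letter `x : G i₀` on a state -/
noncomputable def mu0 (x : G i₀) (s : St G i₀ N) : St G i₀ N :=
  if x = 1 then s
  else (vappend G i₀ N s.1 s.2.1 (nhat G i₀ N s.2.2 x), s.2.1, s.2.2 * QuotientGroup.mk x)

@[simp] theorem mu0_one (s : St G i₀ N) : mu0 G i₀ N 1 s = s := if_pos rfl

theorem vappend_one (v : Vw G i₀ N) (t : Tl G i₀ N) : vappend G i₀ N v t 1 = v :=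
  Subtype.ext (vappendL_one G i₀ N v.1 t)

theorem mu0_mul (x y : G i₀) (s : St G i₀ N) :
    mu0 G i₀ N y (mu0 G i₀ N x s) = mu0 G i₀ N (x * y) s := by
  classical
  by_cases hx : x = 1
  · subst hx; rw [mu0_one, one_mul]
  by_cases hy : y = 1
  · subst hy; rw [mu0_one, mul_one]
  obtain ⟨v, t, b⟩ := s
  rw [show mu0 G i₀ N x (v, t, b)
      = (vappend G i₀ N v t (nhat G i₀ N b x), t, b * QuotientGroup.mk x) from if_neg hx]
  rw [show mu0 G i₀ N y (vappend G i₀ N v t (nhat G i₀ N b x), t, b * QuotientGroup.mk x)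
      = (vappend G i₀ N (vappend G i₀ N v t (nhat G i₀ N b x)) t
          (nhat G i₀ N (b * QuotientGroup.mk x) y), t,
          b * QuotientGroup.mk x * QuotientGroup.mk y) from if_neg hy]
  have hva : vappend G i₀ N (vappend G i₀ N v t (nhat G i₀ N b x)) t
      (nhat G i₀ N (b * QuotientGroup.mk x) y)
      = vappend G i₀ N v t (nhat G i₀ N b (x * y)) := by
    apply Subtype.ext
    show vappendL G i₀ N (vappendL G i₀ N v.1 t _) t _ = _
    rw [vappendL_assoc G i₀ N v.1 v.2, nhat_mul]
    rfl
  rw [hva]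
  by_cases hxy : x * y = 1
  · rw [show mu0 G i₀ N (x * y) (v, t, b) = (v, t, b) from by rw [hxy, mu0_one]]
    rw [hxy, nhat_one, vappend_one]
    have hyx : y = x⁻¹ := eq_inv_of_mul_eq_one_right hxy
    subst hyx
    simp
  · rw [show mu0 G i₀ N (x * y) (v, t, b)
      = (vappend G i₀ N v t (nhat G i₀ N b (x * y)), t, b * QuotientGroup.mk (x * y)) from
        if_neg hxy]
    rw [QuotientGroup.mk_mul, mul_assoc]

theorem tailok_tail {p : Letter G} {r : List (Letter G)}
    (h : TailOK G i₀ N (p :: r)) : TailOK G i₀ N r :=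
  ⟨(List.isChain_cons.mp h.1).2, fun q hq => h.2 q (List.mem_cons_of_mem _ hq)⟩

open scoped Classical in
/-- raw action of a letter `x : G i`, `i ≠ i₀`, on a tail-state -/
noncomputable def tstepRaw (i : I) (x : G i) :
    List (Letter G) × (G i₀ ⧸ N) → List (Letter G) × (G i₀ ⧸ N) :=
  fun p =>
  if x = 1 then p
  else if p.2 = 1 then
    match p.1 with
    | [] => ([⟨i, x⟩], 1)
    | ⟨j, y⟩ :: rest =>
      if hj : j = i then
        (if (hj ▸ y) * x = 1 then splitL G i₀ N rest
         else (⟨i, (hj ▸ y) * x⟩ :: rest, 1))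
      else (⟨i, x⟩ :: ⟨j, y⟩ :: rest, 1)
  else (⟨i, x⟩ :: ⟨i₀, sec G i₀ N p.2⟩ :: p.1, 1)

@[simp] theorem tstepRaw_one (i : I) (p : List (Letter G) × (G i₀ ⧸ N)) :
    tstepRaw G i₀ N i 1 p = p := by
  simp [tstepRaw]

theorem tstepRaw_flush (i : I) {x : G i} (hx : x ≠ 1) {b : G i₀ ⧸ N} (hb : b ≠ 1)
    (l : List (Letter G)) :
    tstepRaw G i₀ N i x (l, b) = (⟨i, x⟩ :: ⟨i₀, sec G i₀ N b⟩ :: l, 1) := by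
  simp [tstepRaw, hx, hb]

theorem tstepRaw_nil (i : I) {x : G i} (hx : x ≠ 1) :
    tstepRaw G i₀ N i x ([], 1) = ([⟨i, x⟩], 1) := by
  simp [tstepRaw, hx]

open scoped Classical in
theorem tstepRaw_cons_eq (i : I) {x : G i} (hx : x ≠ 1) (y : G i) (rest : List (Letter G)) :
    tstepRaw G i₀ N i x (⟨i, y⟩ :: rest, 1)
      = if y * x = 1 then splitL G i₀ N rest else (⟨i, y * x⟩ :: rest, 1) := by
  simp [tstepRaw, hx]

theorem tstepRaw_cons_ne (i : I) {x : G i} (hx : x ≠ 1) {j : I} (hj : j ≠ i) (y : G j)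
    (rest : List (Letter G)) :
    tstepRaw G i₀ N i x (⟨j, y⟩ :: rest, 1) = (⟨i, x⟩ :: ⟨j, y⟩ :: rest, 1) := by
  simp [tstepRaw, hx, hj]

theorem tstep_ok {i : I} (hi : i ≠ i₀) (x : G i) (l : List (Letter G)) (b : G i₀ ⧸ N)
    (hl : TailOK G i₀ N l ∧ NoI₀ G i₀ l) :
    TailOK G i₀ N (tstepRaw G i₀ N i x (l, b)).1 ∧ NoI₀ G i₀ (tstepRaw G i₀ N i x (l, b)).1 := by
  classical
  by_cases hx : x = 1
  · subst hx; rwa [tstepRaw_one]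
  by_cases hb : b = 1
  · subst hb
    rcases l with _ | ⟨⟨j, y⟩, rest⟩
    · rw [tstepRaw_nil G i₀ N i hx]
      refine ⟨⟨List.isChain_singleton _, ?_⟩, hi⟩
      intro p hp
      rcases List.mem_singleton.mp hp with rfl
      exact ⟨hx, fun h => absurd h hi⟩
    · by_cases hj : j = i
      · subst hj
        rw [tstepRaw_cons_eq G i₀ N j hx y rest]
        by_cases hz : y * x = 1
        · rw [if_pos hz]
          exact splitL_ok G i₀ N rest (tailok_tail G i₀ N hl.1)
        · rw [if_neg hz]
          rcases hl with ⟨⟨hc, hne⟩, hh⟩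
          rw [List.isChain_cons] at hc
          refine ⟨⟨List.isChain_cons.2 ⟨hc.1, hc.2⟩, ?_⟩, hh⟩
          intro p hp
          rcases List.mem_cons.mp hp with rfl | hp'
          · exact ⟨hz, fun h => absurd h hi⟩
          · exact hne p (List.mem_cons_of_mem _ hp')
      · rw [tstepRaw_cons_ne G i₀ N i hx hj y rest]
        rcases hl with ⟨⟨hc, hne⟩, hh⟩
        refine ⟨⟨List.isChain_cons.2 ⟨?_, hc⟩, ?_⟩, hi⟩
        · intro q hq
          simp only [List.head?_cons, Option.mem_def, Option.some.injEq] at hq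
          subst hq
          exact fun h => hj h.symm
        · intro p hp
          rcases List.mem_cons.mp hp with rfl | hp'
          · exact ⟨hx, fun h => absurd h hi⟩
          · exact hne p hp'
  · rw [tstepRaw_flush G i₀ N i hx hb l]
    rcases hl with ⟨⟨hc, hne⟩, hh⟩
    refine ⟨⟨?_, ?_⟩, hi⟩
    · refine List.isChain_cons.2 ⟨?_, List.isChain_cons.2 ⟨?_, hc⟩⟩
      · intro q hq
        simp only [List.head?_cons, Option.mem_def, Option.some.injEq] at hq
        subst hq
        exact hi
      · intro q hq
        rcases l with _ | ⟨q', r⟩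
        · simp at hq
        · simp only [List.head?_cons, Option.mem_def, Option.some.injEq] at hq
          subst hq
          exact fun h => hh h.symm
    · intro p hp
      rcases List.mem_cons.mp hp with rfl | hp'
      · exact ⟨hx, fun h => absurd h hi⟩
      · rcases List.mem_cons.mp hp' with rfl | hp''
        · refine ⟨fun h => hb (by rwa [sec_eq_one_iff] at h), fun _ => canon_sec G i₀ N b⟩
        · exact hne p hp''

theorem tstep_mul {i : I} (hi : i ≠ i₀) (x y : G i) (l : List (Letter G)) (b : G i₀ ⧸ N)
    (hl : TailOK G i₀ N l ∧ NoI₀ G i₀ l) :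
    tstepRaw G i₀ N i y (tstepRaw G i₀ N i x (l, b)) = tstepRaw G i₀ N i (x * y) (l, b) := by
  classical
  by_cases hx : x = 1
  · subst hx; rw [tstepRaw_one, one_mul]
  by_cases hy : y = 1
  · subst hy; rw [tstepRaw_one, mul_one]
  by_cases hb : b = 1
  · subst hb
    rcases l with _ | ⟨⟨j, y₀⟩, rest⟩
    · -- empty tail
      rw [tstepRaw_nil G i₀ N i hx, tstepRaw_cons_eq G i₀ N i hy x []]
      by_cases hxy : x * y = 1
      · rw [if_pos hxy, hxy, tstepRaw_one]
        rfl
      · rw [if_neg hxy, tstepRaw_nil G i₀ N i hxy]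
    · by_cases hj : j = i
      · subst hj
        rw [tstepRaw_cons_eq G i₀ N j hx y₀ rest]
        by_cases hz : y₀ * x = 1
        · rw [if_pos hz]
          -- the first step popped the head; y₀ = x⁻¹
          have hy₀ : y₀ = x⁻¹ := eq_inv_of_mul_eq_one_left hz
          have hz2 : y₀ * (x * y) = y := by rw [← mul_assoc, hz, one_mul]
          by_cases hxy : x * y = 1
          · -- y = x⁻¹ = y₀ : everything cancels back
            rw [hxy, tstepRaw_one]
            have hyy : y = y₀ := by rw [hy₀]; exact eq_inv_of_mul_eq_one_right hxy

            rcases rest with _ | ⟨⟨k, w⟩, r2⟩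
            · rw [show splitL G i₀ N ([] : List (Letter G)) = ([], 1) from rfl,
                tstepRaw_nil G i₀ N j hy, hyy]
            · by_cases hk : k = i₀
              · -- splitL pops an i₀ letter
                rw [show splitL G i₀ N (⟨k, w⟩ :: r2) = (r2, QuotientGroup.mk (hk ▸ w)) from
                  by cases hk; exact dif_pos rfl]
                have hw1 : (hk ▸ w : G i₀) ≠ 1 := by
                  cases hk; exact (hl.1.2 ⟨i₀, w⟩ (by simp)).1
                have hcanon : sec G i₀ N (QuotientGroup.mk (hk ▸ w)) = (hk ▸ w) :=
                  (hl.1.2 ⟨k, w⟩ (by simp)).2 hk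
                have hwb : (QuotientGroup.mk (hk ▸ w : G i₀) : G i₀ ⧸ N) ≠ 1 := by
                  intro hcon
                  rw [hcon, sec_one] at hcanon
                  exact hw1 hcanon.symm
                rw [tstepRaw_flush G i₀ N j hy hwb r2, hcanon]
                cases hk
                rw [hyy]
              · rw [show splitL G i₀ N (⟨k, w⟩ :: r2) = (⟨k, w⟩ :: r2, 1) from dif_neg hk]
                have hkj : k ≠ j := by
                  intro hcon
                  have := List.isChain_cons.mp hl.1.1
                  exact (this.1 ⟨k, w⟩ (by simp)) (by simp [hcon])
                rw [tstepRaw_cons_ne G i₀ N j hy hkj w r2, hyy]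
          · -- y₀ * (x*y) = y ≠ 1 : direct gives replace
            rw [tstepRaw_cons_eq G i₀ N j hxy y₀ rest, if_neg (by rw [hz2]; exact hy), hz2]
            -- left side: act y on splitL rest
            rcases rest with _ | ⟨⟨k, w⟩, r2⟩
            · rw [show splitL G i₀ N ([] : List (Letter G)) = ([], 1) from rfl,
                tstepRaw_nil G i₀ N j hy]
            · by_cases hk : k = i₀
              · rw [show splitL G i₀ N (⟨k, w⟩ :: r2) = (r2, QuotientGroup.mk (hk ▸ w)) from
                  by cases hk; exact dif_pos rfl]
                have hw1 : (hk ▸ w : G i₀) ≠ 1 := by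
                  cases hk; exact (hl.1.2 ⟨i₀, w⟩ (by simp)).1
                have hcanon : sec G i₀ N (QuotientGroup.mk (hk ▸ w)) = (hk ▸ w) :=
                  (hl.1.2 ⟨k, w⟩ (by simp)).2 hk
                have hwb : (QuotientGroup.mk (hk ▸ w : G i₀) : G i₀ ⧸ N) ≠ 1 := by
                  intro hcon
                  rw [hcon, sec_one] at hcanon
                  exact hw1 hcanon.symm
                rw [tstepRaw_flush G i₀ N j hy hwb r2, hcanon]
                cases hk
                rfl
              · rw [show splitL G i₀ N (⟨k, w⟩ :: r2) = (⟨k, w⟩ :: r2, 1) from dif_neg hk]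
                have hkj : k ≠ j := by
                  intro hcon
                  have := List.isChain_cons.mp hl.1.1
                  exact (this.1 ⟨k, w⟩ (by simp)) (by simp [hcon])
                rw [tstepRaw_cons_ne G i₀ N j hy hkj w r2]
        · rw [if_neg hz, tstepRaw_cons_eq G i₀ N j hy (y₀ * x) rest]
          by_cases hxy : x * y = 1
          · have hyne : y₀ ≠ 1 := (hl.1.2 ⟨j, y₀⟩ (by simp)).1
            have h5 : y₀ * x * y = y₀ := by rw [mul_assoc, hxy, mul_one]
            rw [hxy, tstepRaw_one, h5, if_neg hyne]
          · rw [tstepRaw_cons_eq G i₀ N j hxy y₀ rest, mul_assoc]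
      · -- head at a different index
        rw [tstepRaw_cons_ne G i₀ N i hx hj y₀ rest, tstepRaw_cons_eq G i₀ N i hy x _]
        by_cases hxy : x * y = 1
        · rw [if_pos hxy, hxy, tstepRaw_one,
            splitL_noI₀ G i₀ N _ hl.2]
        · rw [if_neg hxy, tstepRaw_cons_ne G i₀ N i hxy hj y₀ rest]
  · rw [tstepRaw_flush G i₀ N i hx hb l, tstepRaw_cons_eq G i₀ N i hy x _]
    by_cases hxy : x * y = 1
    · rw [if_pos hxy, hxy, tstepRaw_one,
        show splitL G i₀ N (⟨i₀, sec G i₀ N b⟩ :: l) = (l, QuotientGroup.mk (sec G i₀ N b))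
          from dif_pos rfl, mk_sec]
    · rw [if_neg hxy, tstepRaw_flush G i₀ N i hxy hb l]

/-- the action of letters in `G i`, `i ≠ i₀`, on states -/
noncomputable def mu1 {i : I} (hi : i ≠ i₀) (x : G i) (s : St G i₀ N) : St G i₀ N :=
  (s.1, ⟨(tstepRaw G i₀ N i x (s.2.1.1, s.2.2)).1, tstep_ok G i₀ N hi x s.2.1.1 s.2.2
    ⟨s.2.1.2.1, s.2.1.2.2⟩⟩, (tstepRaw G i₀ N i x (s.2.1.1, s.2.2)).2)

theorem St.ext {s s' : St G i₀ N} (h1 : s.1.1 = s'.1.1) (h2 : s.2.1.1 = s'.2.1.1)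
    (h3 : s.2.2 = s'.2.2) : s = s' := by
  obtain ⟨v, t, b⟩ := s
  obtain ⟨v', t', b'⟩ := s'
  simp only at h1 h2 h3
  rw [Prod.ext_iff, Prod.ext_iff]
  exact ⟨Subtype.ext h1, Subtype.ext h2, h3⟩

theorem mu1_one {i : I} (hi : i ≠ i₀) (s : St G i₀ N) : mu1 G i₀ N hi 1 s = s := by
  apply St.ext <;> simp [mu1]

theorem mu1_mul {i : I} (hi : i ≠ i₀) (x y : G i) (s : St G i₀ N) :
    mu1 G i₀ N hi y (mu1 G i₀ N hi x s) = mu1 G i₀ N hi (x * y) s := by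
  have h := tstep_mul G i₀ N hi x y s.2.1.1 s.2.2 ⟨s.2.1.2.1, s.2.1.2.2⟩
  have e : (((mu1 G i₀ N hi x s).2.1.1 : List (Letter G)), (mu1 G i₀ N hi x s).2.2)
      = tstepRaw G i₀ N i x (s.2.1.1, s.2.2) := rfl
  apply St.ext
  · rfl
  · show (tstepRaw G i₀ N i y (((mu1 G i₀ N hi x s).2.1.1 : List (Letter G)),
      (mu1 G i₀ N hi x s).2.2)).1 = (tstepRaw G i₀ N i (x * y) (s.2.1.1, s.2.2)).1
    rw [e, h]
  · show (tstepRaw G i₀ N i y (((mu1 G i₀ N hi x s).2.1.1 : List (Letter G)),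
      (mu1 G i₀ N hi x s).2.2)).2 = (tstepRaw G i₀ N i (x * y) (s.2.1.1, s.2.2)).2
    rw [e, h]

/-- the homomorphism for the factor `G i₀` -/
noncomputable def A0 : G i₀ →* (Equiv.Perm (St G i₀ N))ᵐᵒᵖ where
  toFun x := MulOpposite.op
    { toFun := mu0 G i₀ N x
      invFun := mu0 G i₀ N x⁻¹
      left_inv := fun s => by rw [mu0_mul, mul_inv_cancel, mu0_one]
      right_inv := fun s => by rw [mu0_mul, inv_mul_cancel, mu0_one] }
  map_one' := by
    apply MulOpposite.unop_injective
    refine Equiv.ext fun s => ?_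
    exact mu0_one G i₀ N s
  map_mul' := fun x y => by
    apply MulOpposite.unop_injective
    refine Equiv.ext fun s => ?_
    exact (mu0_mul G i₀ N x y s).symm

/-- the homomorphism for a factor `G i`, `i ≠ i₀` -/
noncomputable def A1 (i : I) (hi : i ≠ i₀) : G i →* (Equiv.Perm (St G i₀ N))ᵐᵒᵖ where
  toFun x := MulOpposite.op
    { toFun := mu1 G i₀ N hi x
      invFun := mu1 G i₀ N hi x⁻¹
      left_inv := fun s => by rw [mu1_mul, mul_inv_cancel, mu1_one]
      right_inv := fun s => by rw [mu1_mul, inv_mul_cancel, mu1_one] }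
  map_one' := by
    apply MulOpposite.unop_injective
    refine Equiv.ext fun s => ?_
    exact mu1_one G i₀ N hi s
  map_mul' := fun x y => by
    apply MulOpposite.unop_injective
    refine Equiv.ext fun s => ?_
    exact (mu1_mul G i₀ N hi x y s).symm

open scoped Classical in
/-- the full family of homomorphisms -/
noncomputable def Afam : ∀ i, G i →* (Equiv.Perm (St G i₀ N))ᵐᵒᵖ := fun i =>
  if h : i = i₀ then h.symm ▸ A0 G i₀ N else A1 G i₀ N i h

/-- the representation of the free product on states -/
noncomputable def rho : Monoid.CoprodI G →* (Equiv.Perm (St G i₀ N))ᵐᵒᵖ :=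
  CoprodI.lift (Afam G i₀ N)

/-- the (right) action of the free product on states -/
noncomputable def act (g : Monoid.CoprodI G) (s : St G i₀ N) : St G i₀ N :=
  (rho G i₀ N g).unop s

theorem act_mul (g h : Monoid.CoprodI G) (s : St G i₀ N) :
    act G i₀ N (g * h) s = act G i₀ N h (act G i₀ N g s) := by
  unfold act
  rw [map_mul]
  rfl

@[simp] theorem act_one (s : St G i₀ N) : act G i₀ N 1 s = s := by
  unfold act
  rw [map_one]
  rfl

theorem act_of0 (x : G i₀) (s : St G i₀ N) :
    act G i₀ N (CoprodI.of x) s = mu0 G i₀ N x s := by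
  unfold act rho
  rw [CoprodI.lift_of]
  show ((Afam G i₀ N i₀) x).unop s = _
  unfold Afam
  rw [dif_pos rfl]
  rfl

theorem act_of1 {i : I} (hi : i ≠ i₀) (x : G i) (s : St G i₀ N) :
    act G i₀ N (CoprodI.of x) s = mu1 G i₀ N hi x s := by
  unfold act rho
  rw [CoprodI.lift_of]
  show ((Afam G i₀ N i) x).unop s = _
  unfold Afam
  rw [dif_neg hi]
  rfl

theorem act_inv (g : Monoid.CoprodI G) (s : St G i₀ N) :
    act G i₀ N g⁻¹ (act G i₀ N g s) = s := by
  rw [← act_mul, mul_inv_cancel, act_one]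

/-- realization of a state as an element of the free product -/
noncomputable def emb (s : St G i₀ N) : Monoid.CoprodI G :=
  psi G i₀ N (embV G i₀ N s.1.1) * (embL G s.2.1.1 * CoprodI.of (sec G i₀ N s.2.2))

theorem emb_mu0 (x : G i₀) (s : St G i₀ N) :
    emb G i₀ N (mu0 G i₀ N x s) = emb G i₀ N s * CoprodI.of x := by
  classical
  by_cases hx : x = 1
  · subst hx; rw [mu0_one]; simp
  obtain ⟨v, t, b⟩ := s
  rw [show mu0 G i₀ N x (v, t, b)
      = (vappend G i₀ N v t (nhat G i₀ N b x), t, b * QuotientGroup.mk x) from if_neg hx]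
  unfold emb
  show psi G i₀ N (embV G i₀ N (vappendL G i₀ N v.1 t (nhat G i₀ N b x))) * _ = _
  rw [embV_vappendL, map_mul, psi_of]
  have key : (((nhat G i₀ N b x) : G i₀) * sec G i₀ N (b * QuotientGroup.mk x))
      = sec G i₀ N b * x := by
    rw [nhat_coe, inv_mul_cancel_right]
  dsimp only
  simp only [mul_assoc, inv_mul_cancel_left, ← map_mul, key]

theorem embT_tstep {i : I} (hi : i ≠ i₀) (x : G i) (l : List (Letter G)) (b : G i₀ ⧸ N)
    (hl : TailOK G i₀ N l ∧ NoI₀ G i₀ l) :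
    embL G (tstepRaw G i₀ N i x (l, b)).1
        * CoprodI.of (sec G i₀ N (tstepRaw G i₀ N i x (l, b)).2)
      = embL G l * CoprodI.of (sec G i₀ N b) * CoprodI.of x := by
  classical
  by_cases hx : x = 1
  · subst hx; rw [tstepRaw_one]; simp
  by_cases hb : b = 1
  · subst hb
    rcases l with _ | ⟨⟨j, y⟩, rest⟩
    · rw [tstepRaw_nil G i₀ N i hx]; simp
    · by_cases hj : j = i
      · subst hj
        rw [tstepRaw_cons_eq G i₀ N j hx y rest]
        by_cases hz : y * x = 1
        · rw [if_pos hz]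
          rw [embL_splitL G i₀ N rest (tailok_tail G i₀ N hl.1)]
          rw [embL_cons]
          dsimp only
          rw [sec_one, map_one, mul_one, mul_assoc, ← map_mul, hz, map_one, mul_one]
        · rw [if_neg hz]
          rw [embL_cons, embL_cons]
          dsimp only
          simp [mul_assoc]
      · rw [tstepRaw_cons_ne G i₀ N i hx hj y rest]
        simp [mul_assoc]
  · rw [tstepRaw_flush G i₀ N i hx hb l]
    rw [embL_cons, embL_cons]
    dsimp only
    rw [sec_one, map_one, mul_one]

theorem emb_mu1 {i : I} (hi : i ≠ i₀) (x : G i) (s : St G i₀ N) :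
    emb G i₀ N (mu1 G i₀ N hi x s) = emb G i₀ N s * CoprodI.of x := by
  obtain ⟨v, t, b⟩ := s
  unfold emb
  show psi G i₀ N (embV G i₀ N v.1) * (embL G (tstepRaw G i₀ N i x (t.1, b)).1 *
      CoprodI.of (sec G i₀ N (tstepRaw G i₀ N i x (t.1, b)).2)) = _
  rw [embT_tstep G i₀ N hi x t.1 b ⟨t.2.1, t.2.2⟩]
  dsimp only
  rw [← mul_assoc, ← mul_assoc]

/-- the base state -/
noncomputable def s0 : St G i₀ N := (emptyV G i₀ N, emptyT G i₀ N, 1)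

@[simp] theorem emb_s0 : emb G i₀ N (s0 G i₀ N) = 1 := by
  unfold emb s0 emptyV emptyT
  simp [embV, embL, map_one]

theorem emb_act (g : Monoid.CoprodI G) : ∀ s : St G i₀ N,
    emb G i₀ N (act G i₀ N g s) = emb G i₀ N s * g := by
  classical
  induction g using CoprodI.induction_left with
  | one => intro s; rw [act_one, mul_one]
  | mul m x ih =>
    rename_i i
    intro s
    rw [act_mul, ih, ← mul_assoc]
    congr 1
    by_cases hi : i = i₀
    · subst hi
      rw [act_of0, emb_mu0]
    · rw [act_of1 G i₀ N hi, emb_mu1]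

theorem emb_act_s0 (g : Monoid.CoprodI G) : emb G i₀ N (act G i₀ N g (s0 G i₀ N)) = g := by
  rw [emb_act, emb_s0, one_mul]

theorem splitL_snd_one (l : List (Letter G)) (hl : TailOK G i₀ N l)
    (h : (splitL G i₀ N l).2 = 1) : (splitL G i₀ N l).1 = l := by
  classical
  rcases l with _ | ⟨⟨j, g⟩, r⟩
  · rfl
  by_cases hj : j = i₀
  · exfalso
    rw [show splitL G i₀ N (⟨j, g⟩ :: r) = (r, QuotientGroup.mk (hj ▸ g)) from
      by cases hj; exact dif_pos rfl] at h
    have hcanon : sec G i₀ N (QuotientGroup.mk (hj ▸ g)) = (hj ▸ g) :=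
      (hl.2 ⟨j, g⟩ (by simp)).2 hj
    rw [show ((QuotientGroup.mk (hj ▸ g) : G i₀ ⧸ N)) = 1 from h, sec_one] at hcanon
    have hg1 : (hj ▸ g : G i₀) ≠ 1 := by
      cases hj; exact (hl.2 ⟨i₀, g⟩ (by simp)).1
    exact hg1 hcanon.symm
  · rw [show splitL G i₀ N (⟨j, g⟩ :: r) = (⟨j, g⟩ :: r, 1) from dif_neg hj]

theorem act_embL (l : List (Letter G)) (hl : TailOK G i₀ N l) (v : Vw G i₀ N) :
    act G i₀ N (embL G l) (v, emptyT G i₀ N, 1)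
      = (v, ⟨(splitL G i₀ N l).1, splitL_ok G i₀ N l hl⟩, (splitL G i₀ N l).2) := by
  classical
  induction l with
  | nil =>
    rw [embL_nil, act_one]
    apply St.ext <;> rfl
  | cons p rest ih =>
    have hrest : TailOK G i₀ N rest := tailok_tail G i₀ N hl
    rw [embL_cons, act_mul, ih hrest]
    obtain ⟨j, px⟩ := p
    have hpx : px ≠ 1 := (hl.2 ⟨j, px⟩ (by simp)).1
    by_cases hj : j = i₀
    · -- an i₀-letter: it goes into the quotient slot
      cases hj
      have hrno : NoI₀ G i₀ rest := by
        rcases rest with _ | ⟨q, r2⟩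
        · trivial
        · have := (List.isChain_cons.mp hl.1).1 q (by simp)
          intro hq
          exact this hq.symm
      have hsp : splitL G i₀ N rest = (rest, 1) := splitL_noI₀ G i₀ N rest hrno
      have hcanon : sec G i₀ N (QuotientGroup.mk px) = px := (hl.2 ⟨i₀, px⟩ (by simp)).2 rfl
      have hnh : nhat G i₀ N 1 px = 1 := Subtype.ext
        (by rw [nhat_coe, sec_one, one_mul, one_mul, hcanon]; simp)
      have hsp2 : splitL G i₀ N (⟨i₀, px⟩ :: rest) = (rest, QuotientGroup.mk px) := dif_pos rfl
      rw [act_of0]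
      rw [show mu0 G i₀ N px ((v, ⟨(splitL G i₀ N rest).1, splitL_ok G i₀ N rest hrest⟩,
          (splitL G i₀ N rest).2) : St G i₀ N)
        = (vappend G i₀ N v ⟨(splitL G i₀ N rest).1, splitL_ok G i₀ N rest hrest⟩
            (nhat G i₀ N (splitL G i₀ N rest).2 px),
          ⟨(splitL G i₀ N rest).1, splitL_ok G i₀ N rest hrest⟩,
          (splitL G i₀ N rest).2 * QuotientGroup.mk px) from if_neg hpx]
      apply St.ext
      · show (vappendL G i₀ N v.1 _ (nhat G i₀ N (splitL G i₀ N rest).2 px)) = v.1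
        have : nhat G i₀ N (splitL G i₀ N rest).2 px = 1 := by rw [hsp]; exact hnh
        rw [this, vappendL_one]
      · show (splitL G i₀ N rest).1 = (splitL G i₀ N (⟨i₀, px⟩ :: rest)).1
        rw [hsp, hsp2]
      · show (splitL G i₀ N rest).2 * QuotientGroup.mk px
          = (splitL G i₀ N (⟨i₀, px⟩ :: rest)).2
        rw [hsp, hsp2]
        exact one_mul _
    · -- a letter from another factor
      rw [act_of1 G i₀ N hj px]
      have hsp2 : splitL G i₀ N (⟨j, px⟩ :: rest) = (⟨j, px⟩ :: rest, 1) := dif_neg hj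
      have key : tstepRaw G i₀ N j px ((splitL G i₀ N rest).1, (splitL G i₀ N rest).2)
          = (⟨j, px⟩ :: rest, 1) := by
        by_cases hb : (splitL G i₀ N rest).2 = 1
        · have h1 : (splitL G i₀ N rest).1 = rest := splitL_snd_one G i₀ N rest hrest hb
          rw [h1, hb]
          rcases rest with _ | ⟨⟨k, w⟩, r2⟩
          · rw [tstepRaw_nil G i₀ N j hpx]
          · have hkj : k ≠ j := by
              have := (List.isChain_cons.mp hl.1).1 ⟨k, w⟩ (by simp)
              exact fun h => this h.symm
            rw [tstepRaw_cons_ne G i₀ N j hpx hkj w r2]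
        · -- splitL popped an i₀-letter off rest
          rcases rest with _ | ⟨⟨k, w⟩, r2⟩
          · exact absurd rfl hb
          by_cases hk : k = i₀
          · cases hk
            have hs3 : splitL G i₀ N (⟨i₀, w⟩ :: r2) = (r2, QuotientGroup.mk w) := dif_pos rfl
            rw [hs3] at hb ⊢
            dsimp only at hb ⊢
            rw [tstepRaw_flush G i₀ N j hpx hb r2]
            have hcanon : sec G i₀ N (QuotientGroup.mk w) = w :=
              ((tailok_tail G i₀ N hl).2 ⟨i₀, w⟩ (by simp)).2 rfl
            rw [hcanon]
          · have hno : NoI₀ G i₀ (⟨k, w⟩ :: r2) := hk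
            exact absurd (by rw [splitL_noI₀ G i₀ N _ hno]) hb
      apply St.ext
      · rfl
      · show (tstepRaw G i₀ N j px ((splitL G i₀ N rest).1, (splitL G i₀ N rest).2)).1
          = (splitL G i₀ N (⟨j, px⟩ :: rest)).1
        rw [key, hsp2]
      · show (tstepRaw G i₀ N j px ((splitL G i₀ N rest).1, (splitL G i₀ N rest).2)).2
          = (splitL G i₀ N (⟨j, px⟩ :: rest)).2
        rw [key, hsp2]

theorem act_ofN (n : ↥N) (v : Vw G i₀ N) (t : Tl G i₀ N) :
    act G i₀ N (CoprodI.of (n : G i₀)) (v, t, 1) = (vappend G i₀ N v t n, t, 1) := by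
  classical
  rw [act_of0]
  have hmk : (QuotientGroup.mk (n : G i₀) : G i₀ ⧸ N) = 1 := (QuotientGroup.eq_one_iff _).2 n.2
  by_cases hn : (n : G i₀) = 1
  · have hn1 : n = 1 := Subtype.ext hn
    rw [hn, mu0_one, hn1, vappend_one]
  · rw [show mu0 G i₀ N (n : G i₀) ((v, t, 1) : St G i₀ N)
      = (vappend G i₀ N v t (nhat G i₀ N 1 (n : G i₀)), t, 1 * QuotientGroup.mk (n : G i₀))
        from if_neg hn]
    have hnh : nhat G i₀ N 1 (n : G i₀) = n := by
      apply Subtype.ext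
      simp [nhat_coe, hmk]
    rw [hnh]
    apply St.ext
    · rfl
    · rfl
    · show 1 * QuotientGroup.mk (n : G i₀) = 1
      rw [hmk, mul_one]

theorem vappendL_fresh (rest : List (VL G i₀ N)) (t : Tl G i₀ N) (n : ↥N) (hn : n ≠ 1)
    (hd : ∀ q ∈ rest.head?, q.1 ≠ t) :
    vappendL G i₀ N rest t n = (t, n) :: rest := by
  classical
  rcases rest with _ | ⟨⟨q, k⟩, r2⟩
  · simp [vappendL, hn]
  · have hq : ¬ (q = t) := hd (q, k) (by simp)
    simp [vappendL, hn, hq]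

theorem act_psi_embV (lv : List (VL G i₀ N)) (hlv : VOK G i₀ N lv) :
    act G i₀ N (psi G i₀ N (embV G i₀ N lv)) (s0 G i₀ N) = (⟨lv, hlv⟩, emptyT G i₀ N, 1) := by
  classical
  induction lv with
  | nil =>
    rw [embV_nil, map_one, act_one]
    apply St.ext <;> rfl
  | cons p rest ih =>
    obtain ⟨t, n⟩ := p
    have hrest : VOK G i₀ N rest :=
      ⟨(List.isChain_cons.mp hlv.1).2, fun q hq => hlv.2 q (List.mem_cons_of_mem _ hq)⟩
    have hn : n ≠ 1 := hlv.2 (t, n) (by simp)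
    rw [embV_cons, map_mul, act_mul, ih hrest, psi_of]
    have hto : splitL G i₀ N t.1 = (t.1, 1) := splitL_noI₀ G i₀ N t.1 t.2.2
    have h1 : act G i₀ N (embL G t.1) ((⟨rest, hrest⟩ : Vw G i₀ N), emptyT G i₀ N, 1)
        = (⟨rest, hrest⟩, t, 1) := by
      rw [act_embL G i₀ N t.1 t.2.1]
      apply St.ext
      · rfl
      · show (splitL G i₀ N t.1).1 = t.1
        rw [hto]
      · show (splitL G i₀ N t.1).2 = 1
        rw [hto]
    have hd : ∀ q ∈ rest.head?, q.1 ≠ t := by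
      intro q hq
      have := (List.isChain_cons.mp hlv.1).1 q hq
      exact fun h => this h.symm
    have h2 : act G i₀ N (CoprodI.of (n : G i₀)) ((⟨rest, hrest⟩ : Vw G i₀ N), t, 1)
        = (⟨(t, n) :: rest, hlv⟩, t, 1) := by
      rw [act_ofN]
      apply St.ext
      · show vappendL G i₀ N rest t n = (t, n) :: rest
        exact vappendL_fresh G i₀ N rest t n hn hd
      · rfl
      · rfl
    have h3 : act G i₀ N (embL G t.1) ((⟨(t, n) :: rest, hlv⟩ : Vw G i₀ N), emptyT G i₀ N, 1)
        = (⟨(t, n) :: rest, hlv⟩, t, 1) := by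
      rw [act_embL G i₀ N t.1 t.2.1]
      apply St.ext
      · rfl
      · show (splitL G i₀ N t.1).1 = t.1
        rw [hto]
      · show (splitL G i₀ N t.1).2 = 1
        rw [hto]
    rw [act_mul, act_mul, h1, h2, ← h3, act_inv]

theorem embV_append (La Lb : List (VL G i₀ N)) :
    embV G i₀ N (La ++ Lb) = embV G i₀ N Lb * embV G i₀ N La := by
  induction La with
  | nil => simp
  | cons a A' ih =>
    rw [List.cons_append, embV_cons, embV_cons, ih, mul_assoc]

theorem embV_word (L : List (Σ _ : Tl G i₀ N, ↥N)) :
    embV G i₀ N (L.reverse.map fun p => ((p.1 : Tl G i₀ N), (p.2 : ↥N)))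
      = (L.map fun l => CoprodI.of (i := l.1) l.2).prod := by
  induction L with
  | nil => simp
  | cons p L' ih =>
    rw [List.reverse_cons, List.map_append, embV_append, ih]
    simp [embV]

theorem psi_injective : Function.Injective (psi G i₀ N) := by
  classical
  rw [injective_iff_map_eq_one]
  intro u hu
  set w := CoprodI.Word.equiv (M := fun _ : Tl G i₀ N => ↥N) u with hw
  have hwu : (CoprodI.Word.equiv (M := fun _ : Tl G i₀ N => ↥N)).symm w = u :=
    (CoprodI.Word.equiv).symm_apply_apply u
  have hprod : CoprodI.Word.prod w = u := hwu
  set lv : List (VL G i₀ N) := w.toList.reverse.map (fun p => ((p.1 : Tl G i₀ N), (p.2 : ↥N)))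
    with hlvdef
  have h1 : embV G i₀ N lv = u := by
    rw [hlvdef, embV_word, ← hprod]
    rfl
  have hlv : VOK G i₀ N lv := by
    constructor
    · rw [hlvdef]
      rw [List.isChain_map, List.isChain_reverse]
      exact List.IsChain.imp (fun a b h => fun hc => h hc.symm) w.chain_ne
    · intro q hq
      rw [hlvdef] at hq
      simp only [List.mem_map, List.mem_reverse] at hq
      obtain ⟨p, hp, rfl⟩ := hq
      exact w.ne_one p hp
  have h2 := act_psi_embV G i₀ N lv hlv
  rw [h1, hu, act_one] at h2
  have h3 : lv = [] := congrArg (fun z : St G i₀ N => z.1.1) h2.symm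
  have h4 : w.toList = [] := by
    rw [hlvdef] at h3
    simpa using h3
  rw [← hprod]
  have h5 : w = CoprodI.Word.empty := by
    apply CoprodI.Word.ext
    simpa using h4
  rw [h5, CoprodI.Word.prod_empty]

section Glue

/-- index type for nontrivial conjugator tails -/
def Tne := {t : Tl G i₀ N // t ≠ emptyT G i₀ N}

/-- the free product over nontrivial tails -/
abbrev F' := Monoid.CoprodI (fun _ : Tne G i₀ N => ↥N)

/-- inclusion of `F'` into `F` -/
noncomputable def jmap : F' G i₀ N →* F G i₀ N :=
  CoprodI.lift (fun t : Tne G i₀ N =>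
    (CoprodI.of (M := fun _ : Tl G i₀ N => ↥N) (i := t.1) : ↥N →* F G i₀ N))

/-- the comparison map on nontrivial tails -/
noncomputable def theta : F' G i₀ N →* Monoid.CoprodI G :=
  (psi G i₀ N).comp (jmap G i₀ N)

theorem theta_of (t : Tne G i₀ N) (n : ↥N) :
    theta G i₀ N (CoprodI.of (M := fun _ : Tne G i₀ N => ↥N) (i := t) n)
      = conjHom G i₀ N t.1 n := by
  unfold theta jmap
  rw [MonoidHom.comp_apply, CoprodI.lift_of, psi_of, conjHom_apply]

@[simp] theorem conjHom_emptyT (n : ↥N) :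
    conjHom G i₀ N (emptyT G i₀ N) n = CoprodI.of (n : G i₀) := by
  rw [conjHom_apply]
  show embL G [] * _ * (embL G [])⁻¹ = _
  simp

/-- the subgroup `K` -/
noncomputable def Ksub : Subgroup (Monoid.CoprodI G) := (theta G i₀ N).range

/-- `N̄ ⊔ K` -/
noncomputable def Msub : Subgroup (Monoid.CoprodI G) :=
  Subgroup.map (CoprodI.of : G i₀ →* Monoid.CoprodI G) N ⊔ Ksub G i₀ N

theorem conjHom_mem_Msub (t : Tl G i₀ N) (n : ↥N) : conjHom G i₀ N t n ∈ Msub G i₀ N := by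
  classical
  by_cases ht : t = emptyT G i₀ N
  · subst ht
    rw [conjHom_emptyT]
    exact Subgroup.mem_sup_left ⟨n, n.2, rfl⟩
  · exact Subgroup.mem_sup_right
      ⟨CoprodI.of (M := fun _ : Tne G i₀ N => ↥N) (i := (⟨t, ht⟩ : Tne G i₀ N)) n,
        theta_of G i₀ N ⟨t, ht⟩ n⟩

theorem psi_mem_Msub (u : F G i₀ N) : psi G i₀ N u ∈ Msub G i₀ N := by
  induction u using CoprodI.induction_on with
  | one => rw [map_one]; exact one_mem _
  | of t n => rw [psi_of, ← conjHom_apply]; exact conjHom_mem_Msub G i₀ N t n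
  | mul x y hx hy => rw [map_mul]; exact mul_mem hx hy

/-- key conjugation lemma -/
theorem conj_mem_Msub (g : Monoid.CoprodI G) (n : G i₀) (hn : n ∈ N) :
    g * CoprodI.of n * g⁻¹ ∈ Msub G i₀ N := by
  classical
  have hg : g = psi G i₀ N (embV G i₀ N (act G i₀ N g (s0 G i₀ N)).1.1)
      * (embL G (act G i₀ N g (s0 G i₀ N)).2.1.1
        * CoprodI.of (sec G i₀ N (act G i₀ N g (s0 G i₀ N)).2.2)) :=
    (emb_act_s0 G i₀ N g).symm
  generalize (act G i₀ N g (s0 G i₀ N)) = s at hg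
  have hn' : sec G i₀ N s.2.2 * n * (sec G i₀ N s.2.2)⁻¹ ∈ N :=
    Subgroup.Normal.conj_mem ‹N.Normal› n hn _
  have key : g * CoprodI.of n * g⁻¹
      = psi G i₀ N (embV G i₀ N s.1.1)
        * conjHom G i₀ N s.2.1 ⟨sec G i₀ N s.2.2 * n * (sec G i₀ N s.2.2)⁻¹, hn'⟩
        * (psi G i₀ N (embV G i₀ N s.1.1))⁻¹ := by
    rw [conjHom_apply]
    rw [show ((⟨sec G i₀ N s.2.2 * n * (sec G i₀ N s.2.2)⁻¹, hn'⟩ : ↥N) : G i₀)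
      = sec G i₀ N s.2.2 * n * (sec G i₀ N s.2.2)⁻¹ from rfl]
    rw [map_mul, map_mul, map_inv, hg]
    group
  rw [key]
  have h1 : psi G i₀ N (embV G i₀ N s.1.1) ∈ Msub G i₀ N := psi_mem_Msub G i₀ N _
  have h2 := conjHom_mem_Msub G i₀ N s.2.1
    ⟨sec G i₀ N s.2.2 * n * (sec G i₀ N s.2.2)⁻¹, hn'⟩
  exact mul_mem (mul_mem h1 h2) (inv_mem h1)

theorem theta_mem_Msub_conj (g : Monoid.CoprodI G) (u : F' G i₀ N) :
    g * theta G i₀ N u * g⁻¹ ∈ Msub G i₀ N := by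
  induction u using CoprodI.induction_on with
  | one => simpa using one_mem _
  | of t n =>
    rw [theta_of, conjHom_apply]
    have : g * (embL G t.1.1 * CoprodI.of (n : G i₀) * (embL G t.1.1)⁻¹) * g⁻¹
        = (g * embL G t.1.1) * CoprodI.of (n : G i₀) * (g * embL G t.1.1)⁻¹ := by
      group
    rw [this]
    exact conj_mem_Msub G i₀ N _ _ n.2
  | mul x y hx hy =>
    have : g * theta G i₀ N (x * y) * g⁻¹
        = (g * theta G i₀ N x * g⁻¹) * (g * theta G i₀ N y * g⁻¹) := by
      rw [map_mul]; group
    rw [this]; exact mul_mem hx hy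

theorem Msub_normal : (Msub G i₀ N).Normal := by
  constructor
  intro m hm g
  have hle : Msub G i₀ N ≤ Subgroup.comap ((MulAut.conj g).toMonoidHom) (Msub G i₀ N) := by
    apply sup_le
    · rintro x ⟨n, hn, rfl⟩
      show (MulAut.conj g) (CoprodI.of n) ∈ Msub G i₀ N
      rw [MulAut.conj_apply]
      exact conj_mem_Msub G i₀ N g n hn
    · rintro x ⟨u, rfl⟩
      show (MulAut.conj g) (theta G i₀ N u) ∈ Msub G i₀ N
      rw [MulAut.conj_apply]
      exact theta_mem_Msub_conj G i₀ N g u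
  have := hle hm
  rw [Subgroup.mem_comap] at this
  rw [show ((MulAut.conj g).toMonoidHom m) = g * m * g⁻¹ from rfl] at this
  exact this

theorem Msub_eq_normalClosure :
    Msub G i₀ N = Subgroup.normalClosure
      ((CoprodI.of : G i₀ →* Monoid.CoprodI G) '' (N : Set (G i₀))) := by
  apply le_antisymm
  · apply sup_le
    · rintro x ⟨n, hn, rfl⟩
      exact Subgroup.subset_normalClosure ⟨n, hn, rfl⟩
    · rintro x ⟨u, rfl⟩
      haveI hnrm : (Subgroup.normalClosure
        ((CoprodI.of : G i₀ →* Monoid.CoprodI G) '' (N : Set (G i₀)))).Normal :=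
        Subgroup.normalClosure_normal
      induction u using CoprodI.induction_on with
      | one => rw [map_one]; exact one_mem _
      | of t n =>
        rw [theta_of, conjHom_apply]
        have hofn : CoprodI.of (n : G i₀) ∈ Subgroup.normalClosure
            ((CoprodI.of : G i₀ →* Monoid.CoprodI G) '' (N : Set (G i₀))) :=
          Subgroup.subset_normalClosure ⟨n, n.2, rfl⟩
        exact Subgroup.Normal.conj_mem hnrm _ hofn (embL G t.1.1)
      | mul x y hx hy => rw [map_mul]; exact mul_mem hx hy
  · haveI := Msub_normal G i₀ N
    apply Subgroup.normalClosure_le_normal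
    rintro x ⟨n, hn, rfl⟩
    exact Subgroup.mem_sup_left ⟨n, hn, rfl⟩

/-- map from the two-factor coproduct into `F` -/
noncomputable def emap : Monoid.Coprod (↥N) (F' G i₀ N) →* F G i₀ N :=
  Coprod.lift
    (CoprodI.of (M := fun _ : Tl G i₀ N => ↥N) (i := emptyT G i₀ N) : ↥N →* F G i₀ N)
    (jmap G i₀ N)

open scoped Classical in
/-- retraction of `emap` -/
noncomputable def rmap : F G i₀ N →* Monoid.Coprod (↥N) (F' G i₀ N) :=
  CoprodI.lift (fun t : Tl G i₀ N =>
    if h : t = emptyT G i₀ N then Coprod.inl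
    else Coprod.inr.comp
      (CoprodI.of (M := fun _ : Tne G i₀ N => ↥N) (i := (⟨t, h⟩ : Tne G i₀ N))))

theorem emap_inl (n : ↥N) : emap G i₀ N (Coprod.inl n)
    = CoprodI.of (M := fun _ : Tl G i₀ N => ↥N) (i := emptyT G i₀ N) n :=
  Coprod.lift_apply_inl _ _ n

theorem emap_inr (u : F' G i₀ N) : emap G i₀ N (Coprod.inr u) = jmap G i₀ N u :=
  Coprod.lift_apply_inr _ _ u

theorem rmap_emap : (rmap G i₀ N).comp (emap G i₀ N) = MonoidHom.id _ := by
  classical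
  apply Coprod.hom_ext
  · ext n
    simp only [MonoidHom.comp_apply, MonoidHom.id_apply]
    rw [emap_inl]
    unfold rmap
    rw [CoprodI.lift_of, dif_pos rfl]
  · apply CoprodI.ext_hom
    intro t
    ext n
    simp only [MonoidHom.comp_apply, MonoidHom.id_apply]
    rw [emap_inr]
    unfold jmap
    rw [CoprodI.lift_of]
    unfold rmap
    rw [CoprodI.lift_of, dif_neg t.2]
    rfl

theorem emap_injective : Function.Injective (emap G i₀ N) :=
  Function.LeftInverse.injective
    (g := rmap G i₀ N) (fun x => DFunLike.congr_fun (rmap_emap G i₀ N) x)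

/-- iso `N ≃ N̄` as a hom -/
noncomputable def iN : ↥N →* ↥(Subgroup.map (CoprodI.of : G i₀ →* Monoid.CoprodI G) N) :=
  (Subgroup.equivMapOfInjective N _ (CoprodI.of_injective i₀)).toMonoidHom

/-- corestriction of `theta` to `K` -/
noncomputable def tK : F' G i₀ N →* ↥(Ksub G i₀ N) := (theta G i₀ N).rangeRestrict

/-- the comparison surjection -/
noncomputable def pmap : Monoid.Coprod (↥N) (F' G i₀ N)
    →* Monoid.Coprod (↥(Subgroup.map (CoprodI.of : G i₀ →* Monoid.CoprodI G) N))
      (↥(Ksub G i₀ N)) :=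
  Coprod.map (iN G i₀ N) (tK G i₀ N)

theorem pmap_inl (n : ↥N) : pmap G i₀ N (Coprod.inl n) = Coprod.inl (iN G i₀ N n) :=
  Coprod.map_apply_inl _ _ n

theorem pmap_inr (u : F' G i₀ N) : pmap G i₀ N (Coprod.inr u) = Coprod.inr (tK G i₀ N u) :=
  Coprod.map_apply_inr _ _ u

theorem pmap_comm :
    (Coprod.lift (Subgroup.map (CoprodI.of : G i₀ →* Monoid.CoprodI G) N).subtype
      (Ksub G i₀ N).subtype).comp (pmap G i₀ N) = (psi G i₀ N).comp (emap G i₀ N) := by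
  apply Coprod.hom_ext
  · ext n
    simp only [MonoidHom.comp_apply]
    rw [pmap_inl, Coprod.lift_apply_inl, emap_inl, psi_of, ← conjHom_apply, conjHom_emptyT]
    rfl
  · ext u
    simp only [MonoidHom.comp_apply]
    rw [pmap_inr, Coprod.lift_apply_inr, emap_inr]
    rfl

theorem pmap_surjective : Function.Surjective (pmap G i₀ N) := by
  intro y
  induction y using Coprod.induction_on with
  | inl m =>
    obtain ⟨n, hn⟩ := (Subgroup.equivMapOfInjective N _ (CoprodI.of_injective i₀)).surjective m
    refine ⟨Coprod.inl n, ?_⟩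
    rw [pmap_inl]
    exact congrArg _ hn
  | inr k =>
    obtain ⟨u, hu⟩ := (theta G i₀ N).rangeRestrict_surjective k
    refine ⟨Coprod.inr u, ?_⟩
    rw [pmap_inr]
    exact congrArg _ hu
  | mul x y hx hy =>
    obtain ⟨a, rfl⟩ := hx
    obtain ⟨b, rfl⟩ := hy
    exact ⟨a * b, map_mul _ _ _⟩

theorem lift_injective :
    Function.Injective
      (Coprod.lift (Subgroup.map (CoprodI.of : G i₀ →* Monoid.CoprodI G) N).subtype
        (Ksub G i₀ N).subtype) := by
  rw [injective_iff_map_eq_one]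
  intro x hx
  obtain ⟨z, rfl⟩ := pmap_surjective G i₀ N x
  have h1 : psi G i₀ N (emap G i₀ N z) = 1 := by
    have := DFunLike.congr_fun (pmap_comm G i₀ N) z
    rw [MonoidHom.comp_apply, MonoidHom.comp_apply] at this
    rw [← this, hx]
  have h2 : emap G i₀ N z = 1 := psi_injective G i₀ N (by rw [h1, map_one])
  have h3 : z = 1 := emap_injective G i₀ N (by rw [h2, map_one])
  rw [h3, map_one]

theorem lift_range :
    MonoidHom.range
      (Coprod.lift (Subgroup.map (CoprodI.of : G i₀ →* Monoid.CoprodI G) N).subtype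
        (Ksub G i₀ N).subtype)
      = Subgroup.normalClosure
        ((CoprodI.of : G i₀ →* Monoid.CoprodI G) '' (N : Set (G i₀))) := by
  rw [Coprod.range_lift, Subgroup.range_subtype, Subgroup.range_subtype]
  exact Msub_eq_normalClosure G i₀ N

end Glue

end Stmt0


/-- A nontrivial normal subgroup `N` of a factor `G i₀` is a free factor of its
normal closure `H` in the free product `∐ᵢ G i`: there is a subgroup `K ≤ H` such
that the canonical map `N ∗ K →* ∐ᵢ G i` is injective with range `H`. -/
theorem statement0 {I : Type*} (G : I → Type*) [∀ i, Group (G i)]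
    [∀ i, Nontrivial (G i)] (i₀ : I) (N : Subgroup (G i₀)) [N.Normal] (hN : N ≠ ⊥)
    (H : Subgroup (Monoid.CoprodI G))
    (hH : H = Subgroup.normalClosure
      ((Monoid.CoprodI.of : G i₀ →* Monoid.CoprodI G) '' (N : Set (G i₀)))) :
    ∃ K : Subgroup (Monoid.CoprodI G), K ≤ H ∧
      Function.Injective
        (Monoid.Coprod.lift
          (Subgroup.map (Monoid.CoprodI.of : G i₀ →* Monoid.CoprodI G) N).subtype
          K.subtype) ∧
      MonoidHom.range
        (Monoid.Coprod.lift
          (Subgroup.map (Monoid.CoprodI.of : G i₀ →* Monoid.CoprodI G) N).subtype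
          K.subtype) = H := by
  subst hH
  refine ⟨Stmt0.Ksub G i₀ N, ?_, Stmt0.lift_injective G i₀ N, Stmt0.lift_range G i₀ N⟩
  rw [← Stmt0.Msub_eq_normalClosure G i₀ N]
  exact le_sup_right
end

section
/- Let (G_i)_{i∈I} be a family of nontrivial groups, let i₀ ∈ I, and let N be a normal subgroup of G_{i₀}. Let H be the normal closure in the free product ∐_{i∈I} G_i of the image ι_{i₀}(N) of N under the canonical inclusion ι_{i₀} : G_{i₀} → ∐_{i∈I} G_i. Then H ∩ ι_{i₀}(G_{i₀}) = ι_{i₀}(N); i.e., the intersection of H with the image of the canonical inclusion of G_{i₀} equals the image of N. -/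
/-- The intersection of the normal closure `H` of `ι_{i₀}(N)` in the free product
with the image of `ι_{i₀}` is exactly `ι_{i₀}(N)`. -/
theorem statement1 {I : Type*} (G : I → Type*) [∀ i, Group (G i)]
    [∀ i, Nontrivial (G i)] (i₀ : I) (N : Subgroup (G i₀)) [N.Normal]
    (H : Subgroup (Monoid.CoprodI G))
    (hH : H = Subgroup.normalClosure
      ((Monoid.CoprodI.of : G i₀ →* Monoid.CoprodI G) '' (N : Set (G i₀)))) :
    H ⊓ (Monoid.CoprodI.of : G i₀ →* Monoid.CoprodI G).range =
      Subgroup.map (Monoid.CoprodI.of : G i₀ →* Monoid.CoprodI G) N := by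
  classical
  set f : ∀ i, G i →* G i₀ ⧸ N := fun i =>
    if h : i = i₀ then h ▸ (QuotientGroup.mk' N) else 1 with hf
  have hfi₀ : f i₀ = QuotientGroup.mk' N := by simp [hf]
  set π : Monoid.CoprodI G →* G i₀ ⧸ N := Monoid.CoprodI.lift f with hπ
  have hπof : ∀ g : G i₀, π (Monoid.CoprodI.of g) = QuotientGroup.mk' N g := by
    intro g
    rw [hπ, Monoid.CoprodI.lift_of, hfi₀]
  have hker : H ≤ π.ker := by
    rw [hH]
    apply Subgroup.normalClosure_le_normal
    rintro _ ⟨n, hn, rfl⟩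
    simp only [SetLike.mem_coe, MonoidHom.mem_ker, hπof]
    simpa [QuotientGroup.eq_one_iff] using hn
  ext x
  constructor
  · rintro ⟨hxH, g, rfl⟩
    refine ⟨g, ?_, rfl⟩
    have := hker hxH
    rw [MonoidHom.mem_ker, hπof] at this
    simpa [QuotientGroup.eq_one_iff] using this
  · rintro ⟨n, hn, rfl⟩
    refine ⟨?_, ⟨n, rfl⟩⟩
    rw [hH]
    exact Subgroup.subset_normalClosure ⟨n, hn, rfl⟩
end
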